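/- arXiv:2112.00056 — 5 statements merged into one kernel-verified Lean document; each statement's English description precedes it below -/
import Mathlib

section
/- For complex n×n strict contractions A and B, the 2n×2n block matrix [[(I-A*A)^{-1}, (I-A*B)^{-1}], [(I-B*A)^{-1}, (I-B*B)^{-1}]] is positive semidefinite. -/
open Matrix
open scoped ComplexOrder

noncomputable def opNorm {n : ℕ} (A : Matrix (Fin n) (Fin n) ℂ) : ℝ :=
  ‖(Matrix.toEuclideanCLM (𝕜 := ℂ) A : EuclideanSpace ℂ (Fin n) →L[ℂ] EuclideanSpace ℂ (Fin n))‖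

private lemma aux_ring {R : Type*} [Ring R] (x y c l : R)
    (h1 : l * c = l - 1) (h2 : c * l = l - 1) :
    (1 - x) * l * (1 - y) = (x - c) * l * (y - c) + (1 - x - y + c) := by
  have r1 : l * c - l + 1 = 0 := by rw [h1]; abel
  have r2 : c * l - l + 1 = 0 := by rw [h2]; abel
  have cert : (1 - x) * l * (1 - y) - ((x - c) * l * (y - c) + (1 - x - y + c))
      = (x - 1) * (l * c - l + 1) + (c * l - l + 1) * (y - c) := by noncomm_ring
  have h0 : (1 - x) * l * (1 - y) - ((x - c) * l * (y - c) + (1 - x - y + c)) = 0 := by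
    rw [cert, r1, r2]; simp
  exact sub_eq_zero.mp h0

private lemma aux_schur {R : Type*} [Ring R] (x y c l f g p q gr : R)
    (hid : (1 - x) * l * (1 - y) = gr + (1 - x - y + c))
    (hp : 1 - x - y + c = p + q)
    (hf : (1 - y) * f = 1) (hg : g * (1 - x) = 1) :
    l - g * p * f = g * (q + gr) * f := by
  have hl : g * ((1 - x) * l * (1 - y)) * f = l := by
    have assoc : g * ((1 - x) * l * (1 - y)) * f = (g * (1 - x)) * l * ((1 - y) * f) := by
      noncomm_ring
    rw [assoc, hg, hf, one_mul, mul_one]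
  calc l - g * p * f = g * ((1 - x) * l * (1 - y)) * f - g * p * f := by rw [hl]
    _ = g * (gr + (p + q)) * f - g * p * f := by rw [hid, hp]
    _ = g * (q + gr) * f := by noncomm_ring

/-- A strict contraction `A` gives a positive definite `1 - Aᴴ * A`. -/
private lemma posDef_one_sub {n : ℕ} (A : Matrix (Fin n) (Fin n) ℂ)
    (hA : opNorm A < 1) : (1 - Aᴴ * A).PosDef := by
  rw [Matrix.posDef_iff_dotProduct_mulVec]
  constructor
  · exact Matrix.isHermitian_one.sub (Matrix.isHermitian_conjTranspose_mul_self A)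
  · intro x hx
    have key : star x ⬝ᵥ ((1 - Aᴴ * A) *ᵥ x)
        = star x ⬝ᵥ x - star (A *ᵥ x) ⬝ᵥ (A *ᵥ x) := by
      rw [Matrix.sub_mulVec, dotProduct_sub, Matrix.one_mulVec]
      congr 1
      rw [← Matrix.mulVec_mulVec, Matrix.dotProduct_mulVec, ← Matrix.star_mulVec]
    set x' : EuclideanSpace ℂ (Fin n) := (WithLp.equiv 2 _).symm x with hx'
    set y' : EuclideanSpace ℂ (Fin n) := (WithLp.equiv 2 _).symm (A *ᵥ x) with hy'
    have e1 : star x ⬝ᵥ x = (‖x'‖ : ℂ) ^ 2 := by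
      have := inner_self_eq_norm_sq_to_K (𝕜 := ℂ) x'
      rw [hx', WithLp.equiv_symm_apply, EuclideanSpace.inner_toLp_toLp, dotProduct_comm] at this
      exact this
    have e2 : star (A *ᵥ x) ⬝ᵥ (A *ᵥ x) = (‖y'‖ : ℂ) ^ 2 := by
      have := inner_self_eq_norm_sq_to_K (𝕜 := ℂ) y'
      rw [hy', WithLp.equiv_symm_apply, EuclideanSpace.inner_toLp_toLp, dotProduct_comm] at this
      exact this
    have hyx : y' = Matrix.toEuclideanCLM (𝕜 := ℂ) A x' := by
      rw [hx', hy', WithLp.equiv_symm_apply, Matrix.toEuclideanCLM_toLp]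
    have hx'0 : x' ≠ 0 := by
      simp only [hx', ne_eq, EmbeddingLike.map_eq_zero_iff]
      exact fun h => hx ((WithLp.equiv 2 _).symm.injective (h.trans rfl))
    have hnx : 0 < ‖x'‖ := norm_pos_iff.mpr hx'0
    have hny : ‖y'‖ ≤ opNorm A * ‖x'‖ := by
      rw [hyx]
      exact (Matrix.toEuclideanCLM (𝕜 := ℂ) A).le_opNorm x'
    have hlt : ‖y'‖ < ‖x'‖ := lt_of_le_of_lt hny (by nlinarith)
    have hreal : (0 : ℝ) < ‖x'‖ ^ 2 - ‖y'‖ ^ 2 := by nlinarith [norm_nonneg y']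
    rw [key, e1, e2]
    have : ((‖x'‖ : ℂ) ^ 2 - (‖y'‖ : ℂ) ^ 2) = ((‖x'‖ ^ 2 - ‖y'‖ ^ 2 : ℝ) : ℂ) := by
      push_cast; ring
    rw [this]
    exact_mod_cast hreal

set_option maxHeartbeats 1000000 in
/-- `1 - Aᴴ * B` is a unit for strict contractions. -/
private lemma isUnit_one_sub {n : ℕ} (A B : Matrix (Fin n) (Fin n) ℂ)
    (hA : opNorm A < 1) (hB : opNorm B < 1) : IsUnit (1 - Aᴴ * B) := by
  refine Matrix.mulVec_injective_iff_isUnit.mp ?_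
  intro x y hxy
  by_contra hne
  set z := x - y with hzdef
  have hz : z ≠ 0 := sub_ne_zero.mpr hne
  have h0 : (1 - Aᴴ * B) *ᵥ z = 0 := by
    rw [hzdef, Matrix.mulVec_sub, hxy, sub_self]
  have hz2 : star z ⬝ᵥ z = star (A *ᵥ z) ⬝ᵥ (B *ᵥ z) := by
    have h1 : star z ⬝ᵥ ((1 - Aᴴ * B) *ᵥ z) = 0 := by rw [h0, dotProduct_zero]
    rw [Matrix.sub_mulVec, dotProduct_sub, Matrix.one_mulVec, sub_eq_zero] at h1
    rw [h1, ← Matrix.mulVec_mulVec, Matrix.dotProduct_mulVec, ← Matrix.star_mulVec]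
  set z' : EuclideanSpace ℂ (Fin n) := (WithLp.equiv 2 _).symm z with hz'
  set a' : EuclideanSpace ℂ (Fin n) := (WithLp.equiv 2 _).symm (A *ᵥ z) with ha'
  set b' : EuclideanSpace ℂ (Fin n) := (WithLp.equiv 2 _).symm (B *ᵥ z) with hb'
  have e0 : (inner ℂ z' z' : ℂ) = (inner ℂ a' b' : ℂ) := by
    rw [hz', ha', hb', WithLp.equiv_symm_apply, EuclideanSpace.inner_toLp_toLp,
      EuclideanSpace.inner_toLp_toLp, dotProduct_comm z, hz2, dotProduct_comm]
  have e1 : ‖z'‖ ^ 2 = ‖(inner ℂ a' b' : ℂ)‖ := by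
    rw [← e0, inner_self_eq_norm_sq_to_K]
    simp [norm_pow]
  have hcs : ‖(inner ℂ a' b' : ℂ)‖ ≤ ‖a'‖ * ‖b'‖ := norm_inner_le_norm a' b'
  have haz : ‖a'‖ ≤ opNorm A * ‖z'‖ := by
    have : a' = Matrix.toEuclideanCLM (𝕜 := ℂ) A z' := by
      rw [hz', ha', WithLp.equiv_symm_apply, Matrix.toEuclideanCLM_toLp]
    rw [this]
    exact (Matrix.toEuclideanCLM (𝕜 := ℂ) A).le_opNorm z'
  have hbz : ‖b'‖ ≤ opNorm B * ‖z'‖ := by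
    have : b' = Matrix.toEuclideanCLM (𝕜 := ℂ) B z' := by
      rw [hz', hb', WithLp.equiv_symm_apply, Matrix.toEuclideanCLM_toLp]
    rw [this]
    exact (Matrix.toEuclideanCLM (𝕜 := ℂ) B).le_opNorm z'
  have hz'0 : z' ≠ 0 := by
    simp only [hz', ne_eq, EmbeddingLike.map_eq_zero_iff]
    exact fun h => hz ((WithLp.equiv 2 _).symm.injective (h.trans rfl))
  have hnz : 0 < ‖z'‖ := norm_pos_iff.mpr hz'0
  have hOA : 0 ≤ opNorm A := norm_nonneg _
  have hOB : 0 ≤ opNorm B := norm_nonneg _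
  have hab : ‖a'‖ * ‖b'‖ ≤ (opNorm A * ‖z'‖) * (opNorm B * ‖z'‖) :=
    mul_le_mul haz hbz (norm_nonneg _) (by positivity)
  have h2 : opNorm A * opNorm B < 1 := by nlinarith
  have hfin : ‖z'‖ ^ 2 ≤ (opNorm A * opNorm B) * ‖z'‖ ^ 2 := by nlinarith
  have hlt : (opNorm A * opNorm B) * ‖z'‖ ^ 2 < 1 * ‖z'‖ ^ 2 :=
    mul_lt_mul_of_pos_right h2 (by positivity)
  nlinarith

/-- The Hua block matrix of two strict contractions is positive semidefinite. -/
theorem hua_block_posSemidef {n : ℕ} (A B : Matrix (Fin n) (Fin n) ℂ)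
    (hA : opNorm A < 1) (hB : opNorm B < 1) :
    (Matrix.fromBlocks (1 - Aᴴ * A)⁻¹ (1 - Aᴴ * B)⁻¹ (1 - Bᴴ * A)⁻¹ (1 - Bᴴ * B)⁻¹).PosSemidef := by
  have hPA : (1 - Aᴴ * A).PosDef := posDef_one_sub A hA
  have hPB : (1 - Bᴴ * B).PosDef := posDef_one_sub B hB
  have hR : IsUnit (1 - Aᴴ * B) := isUnit_one_sub A B hA hB
  have hRdet : IsUnit (1 - Aᴴ * B).det := (Matrix.isUnit_iff_isUnit_det _).mp hR
  have hPAdet : IsUnit (1 - Aᴴ * A).det := (Matrix.isUnit_iff_isUnit_det _).mp hPA.isUnit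
  have hPBdet : IsUnit (1 - Bᴴ * B).det := (Matrix.isUnit_iff_isUnit_det _).mp hPB.isUnit
  -- rewrite the (2,1)-block as a conjugate transpose
  have hblock : (1 - Bᴴ * A)⁻¹ = ((1 - Aᴴ * B)⁻¹)ᴴ := by
    rw [Matrix.conjTranspose_nonsing_inv]
    congr 1
    simp [Matrix.conjTranspose_sub, Matrix.conjTranspose_mul]
  rw [hblock]
  have hPAinv : ((1 - Aᴴ * A)⁻¹).PosDef := hPA.inv
  letI : Invertible ((1 - Aᴴ * A)⁻¹) := hPAinv.isUnit.invertible
  rw [Matrix.PosDef.fromBlocks₁₁ _ _ hPAinv]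
  rw [Matrix.nonsing_inv_nonsing_inv _ hPAdet]
  -- the Schur complement identity
  set l := (1 - Bᴴ * B)⁻¹ with hl
  have hil : l * (1 - Bᴴ * B) = 1 := Matrix.nonsing_inv_mul _ hPBdet
  have h1 : l * (Bᴴ * B) = l - 1 := by
    rw [Matrix.mul_sub, Matrix.mul_one] at hil
    rw [eq_sub_iff_add_eq, ← hil]; abel
  have hli : (1 - Bᴴ * B) * l = 1 := Matrix.mul_nonsing_inv _ hPBdet
  have h2 : (Bᴴ * B) * l = l - 1 := by
    rw [Matrix.sub_mul, Matrix.one_mul] at hli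
    rw [eq_sub_iff_add_eq, ← hli]; abel
  have hid := aux_ring (Bᴴ * A) (Aᴴ * B) (Bᴴ * B) l h1 h2
  have hp : (1 : Matrix (Fin n) (Fin n) ℂ) - Bᴴ * A - Aᴴ * B + Bᴴ * B
      = (1 - Aᴴ * A) + (A - B)ᴴ * (A - B) := by
    rw [Matrix.conjTranspose_sub]
    noncomm_ring
  have hf : (1 - Aᴴ * B) * (1 - Aᴴ * B)⁻¹ = 1 := Matrix.mul_nonsing_inv _ hRdet
  have hg : ((1 - Aᴴ * B)⁻¹)ᴴ * (1 - Bᴴ * A) = 1 := by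
    have := congrArg Matrix.conjTranspose hf
    rwa [Matrix.conjTranspose_mul, Matrix.conjTranspose_one, Matrix.conjTranspose_sub,
      Matrix.conjTranspose_mul, Matrix.conjTranspose_conjTranspose, Matrix.conjTranspose_one]
      at this
  have main := aux_schur (Bᴴ * A) (Aᴴ * B) (Bᴴ * B) l ((1 - Aᴴ * B)⁻¹) (((1 - Aᴴ * B)⁻¹)ᴴ)
    (1 - Aᴴ * A) ((A - B)ᴴ * (A - B)) ((Bᴴ * A - Bᴴ * B) * l * (Aᴴ * B - Bᴴ * B))
    hid hp hf hg
  rw [main]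
  -- positive semidefiniteness of the Gram expression
  have hM2 : ((A - B)ᴴ * (A - B) + (Bᴴ * A - Bᴴ * B) * l * (Aᴴ * B - Bᴴ * B)).PosSemidef := by
    refine (Matrix.posSemidef_conjTranspose_mul_self (A - B)).add ?_
    have hct : (Aᴴ * B - Bᴴ * B)ᴴ = Bᴴ * A - Bᴴ * B := by
      simp [Matrix.conjTranspose_sub, Matrix.conjTranspose_mul]
    have := (hPB.inv.posSemidef).conjTranspose_mul_mul_same (Aᴴ * B - Bᴴ * B)
    rwa [hct] at this
  exact hM2.conjTranspose_mul_mul_same _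
end

section
/- Let A, B be n×n complex strict contractions and set X = (I - A)^{-1}(I + A), Y = (I - B)^{-1}(I + B). Then I - A*B = 2 (I + X*)^{-1} (X* + Y) (I + Y)^{-1}. -/
open Matrix

lemma isUnit_one_sub_of_opNorm_lt_one {n : ℕ} (A : Matrix (Fin n) (Fin n) ℂ)
    (hA : opNorm A < 1) : IsUnit (1 - A) := by
  have h : IsUnit (1 - Matrix.toEuclideanCLM (𝕜 := ℂ) A) := (Units.oneSub _ hA).isUnit
  have := h.map (Matrix.toEuclideanCLM (𝕜 := ℂ)).symm
  simpa using this

/-- Möbius change of variables identity for `I - A*B`. -/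
theorem mobius_identity {n : ℕ} (A B : Matrix (Fin n) (Fin n) ℂ)
    (hA : opNorm A < 1) (hB : opNorm B < 1)
    (X Y : Matrix (Fin n) (Fin n) ℂ)
    (hX : X = (1 - A)⁻¹ * (1 + A)) (hY : Y = (1 - B)⁻¹ * (1 + B)) :
    1 - Aᴴ * B = (2 : ℂ) • ((1 + Xᴴ)⁻¹ * (Xᴴ + Y) * (1 + Y)⁻¹) := by
  have hA1 : IsUnit (1 - A) := isUnit_one_sub_of_opNorm_lt_one A hA
  have hB1 : IsUnit (1 - B) := isUnit_one_sub_of_opNorm_lt_one B hB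
  have hA1' : IsUnit (1 - Aᴴ) := by
    have h : (1 - Aᴴ) = (1 - A)ᴴ := by simp
    rw [h, Matrix.isUnit_conjTranspose]
    exact hA1
  have dA' : IsUnit (1 - Aᴴ).det := (Matrix.isUnit_iff_isUnit_det _).mp hA1'
  have dB : IsUnit (1 - B).det := (Matrix.isUnit_iff_isUnit_det _).mp hB1
  -- Xᴴ in closed form
  have hXH : Xᴴ = (1 + Aᴴ) * (1 - Aᴴ)⁻¹ := by
    rw [hX]
    simp [Matrix.conjTranspose_nonsing_inv]
  -- 1 + Xᴴ = 2 • (1 - Aᴴ)⁻¹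
  have h1X : 1 + Xᴴ = (2 : ℂ) • (1 - Aᴴ)⁻¹ := by
    rw [hXH]
    nth_rewrite 1 [← Matrix.mul_nonsing_inv (1 - Aᴴ) dA']
    rw [← add_mul]
    have h2 : (1 - Aᴴ) + (1 + Aᴴ) = (2 : ℂ) • (1 : Matrix (Fin n) (Fin n) ℂ) := by
      rw [two_smul]; noncomm_ring
    rw [h2, smul_mul_assoc, one_mul]
  -- 1 + Y = 2 • (1 - B)⁻¹
  have h1Y : 1 + Y = (2 : ℂ) • (1 - B)⁻¹ := by
    rw [hY]
    nth_rewrite 1 [← Matrix.nonsing_inv_mul (1 - B) dB]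
    rw [← mul_add]
    have h2 : (1 - B) + (1 + B) = (2 : ℂ) • (1 : Matrix (Fin n) (Fin n) ℂ) := by
      rw [two_smul]; noncomm_ring
    rw [h2, mul_smul_comm, mul_one]
  -- inverses
  have hinvX : (1 + Xᴴ)⁻¹ = (2⁻¹ : ℂ) • (1 - Aᴴ) := by
    apply Matrix.inv_eq_right_inv
    rw [h1X, smul_mul_assoc, mul_smul_comm, smul_smul, Matrix.nonsing_inv_mul _ dA']
    norm_num
  have hinvY : (1 + Y)⁻¹ = (2⁻¹ : ℂ) • (1 - B) := by
    apply Matrix.inv_eq_right_inv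
    rw [h1Y, smul_mul_assoc, mul_smul_comm, smul_smul, Matrix.nonsing_inv_mul _ dB]
    norm_num
  -- core computation
  have core : (1 - Aᴴ) * (Xᴴ + Y) * (1 - B) = (2 : ℂ) • (1 - Aᴴ * B) := by
    rw [hXH, hY, mul_add, add_mul]
    have e1 : (1 - Aᴴ) * ((1 + Aᴴ) * (1 - Aᴴ)⁻¹) * (1 - B) = (1 + Aᴴ) * (1 - B) := by
      have comm : (1 - Aᴴ) * (1 + Aᴴ) = (1 + Aᴴ) * (1 - Aᴴ) := by noncomm_ring
      rw [← mul_assoc, comm, Matrix.mul_nonsing_inv_cancel_right _ _ dA']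
    have e2 : (1 - Aᴴ) * ((1 - B)⁻¹ * (1 + B)) * (1 - B) = (1 - Aᴴ) * (1 + B) := by
      have comm : (1 + B) * (1 - B) = (1 - B) * (1 + B) := by noncomm_ring
      rw [mul_assoc, mul_assoc, comm, Matrix.nonsing_inv_mul_cancel_left _ _ dB]
    rw [e1, e2, two_smul]
    noncomm_ring
  rw [hinvX, hinvY]
  have hs : ((2⁻¹ : ℂ) • (1 - Aᴴ)) * (Xᴴ + Y) * ((2⁻¹ : ℂ) • (1 - B))
      = (4⁻¹ : ℂ) • ((1 - Aᴴ) * (Xᴴ + Y) * (1 - B)) := by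
    rw [smul_mul_assoc, smul_mul_assoc, mul_smul_comm, smul_smul]
    norm_num
  rw [hs, core, smul_smul, smul_smul]
  norm_num
end

section
/- For 0 ≤ p ≤ 2, the function f(t) = sqrt(log(1 + t^p)) is concave on (0, ∞). -/
open Real Set

private lemma aux_concaveOn_congr {s : Set ℝ} {f g : ℝ → ℝ} (hf : ConcaveOn ℝ s f)
    (h : ∀ x ∈ s, f x = g x) : ConcaveOn ℝ s g :=
  ⟨hf.1, fun x hx y hy a b ha hb hab => by
    rw [← h x hx, ← h y hy, ← h _ (hf.1 hx hy ha hb hab)]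
    exact hf.2 hx hy ha hb hab⟩

private lemma aux_concaveOn_comp {s t : Set ℝ} {f g : ℝ → ℝ}
    (hg : ConcaveOn ℝ t g) (hf : ConcaveOn ℝ s f) (hst : Set.MapsTo f s t)
    (hg' : MonotoneOn g t) : ConcaveOn ℝ s (g ∘ f) :=
  ⟨hf.1, fun x hx y hy a b ha hb hab =>
    (hg.2 (hst hx) (hst hy) ha hb hab).trans <|
      hg' (hg.1 (hst hx) (hst hy) ha hb hab) (hst (hf.1 hx hy ha hb hab))
        (hf.2 hx hy ha hb hab)⟩

private lemma aux_key (u : ℝ) (hu : 0 < u) :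
    (1 - u ^ 2) * Real.log (1 + u ^ 2) ≤ u ^ 2 := by
  have hL0 : 0 ≤ Real.log (1 + u ^ 2) := Real.log_nonneg (by nlinarith)
  have hLle : Real.log (1 + u ^ 2) ≤ u ^ 2 := by
    have := Real.log_le_sub_one_of_pos (show (0:ℝ) < 1 + u ^ 2 by positivity)
    linarith
  rcases le_or_gt 1 u with h | h
  · nlinarith
  · nlinarith

private lemma aux_g_concave :
    ConcaveOn ℝ (Set.Ioi (0:ℝ)) (fun u => Real.sqrt (Real.log (1 + u ^ 2))) := by
  set L : ℝ → ℝ := fun u => Real.log (1 + u ^ 2) with hLdef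
  have hpos : ∀ u : ℝ, u ∈ Set.Ioi (0:ℝ) → 0 < L u := fun u hu =>
    Real.log_pos (by have := Set.mem_Ioi.mp hu; nlinarith)
  refine concaveOn_of_hasDerivWithinAt2_nonpos (convex_Ioi 0)
    (f' := fun u => (2 * u / (1 + u ^ 2)) / (2 * Real.sqrt (L u)))
    (f'' := fun u =>
      (1 * ((1 + u ^ 2) * Real.sqrt (L u)) -
        u * (2 * u * Real.sqrt (L u) +
          (1 + u ^ 2) * ((2 * u / (1 + u ^ 2)) / (2 * Real.sqrt (L u))))) /
        ((1 + u ^ 2) * Real.sqrt (L u)) ^ 2)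
    ?_ ?_ ?_ ?_
  · exact Real.continuous_sqrt.comp_continuousOn
      ((continuousOn_const.add (continuous_pow 2).continuousOn).log
        (fun x _ => ne_of_gt (by show (0:ℝ) < 1 + x ^ 2; positivity)))
  · rw [interior_Ioi]
    intro u hu
    have h1 : HasDerivAt (fun u : ℝ => 1 + u ^ 2) (2 * u) u := by
      simpa using (hasDerivAt_pow 2 u).const_add 1
    have hL : HasDerivAt L (2 * u / (1 + u ^ 2)) u := h1.log (by positivity)
    exact (hL.sqrt (ne_of_gt (hpos u hu))).hasDerivWithinAt
  · rw [interior_Ioi]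
    intro u hu
    have h1 : HasDerivAt (fun u : ℝ => 1 + u ^ 2) (2 * u) u := by
      simpa using (hasDerivAt_pow 2 u).const_add 1
    have hL : HasDerivAt L (2 * u / (1 + u ^ 2)) u := h1.log (by positivity)
    have hsq : HasDerivAt (fun u => Real.sqrt (L u))
        ((2 * u / (1 + u ^ 2)) / (2 * Real.sqrt (L u))) u :=
      hL.sqrt (ne_of_gt (hpos u hu))
    have hD : HasDerivAt (fun u => (1 + u ^ 2) * Real.sqrt (L u))
        (2 * u * Real.sqrt (L u) +
          (1 + u ^ 2) * ((2 * u / (1 + u ^ 2)) / (2 * Real.sqrt (L u)))) u :=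
      h1.mul hsq
    have hDne : (1 + u ^ 2) * Real.sqrt (L u) ≠ 0 := by
      have := Real.sqrt_pos.mpr (hpos u hu)
      positivity
    have := (hasDerivAt_id u).div hD hDne
    have heq : ∀ v ∈ Set.Ioi (0:ℝ),
        (2 * v / (1 + v ^ 2)) / (2 * Real.sqrt (L v)) =
          v / ((1 + v ^ 2) * Real.sqrt (L v)) := by
      intro v hv
      have hs : (0:ℝ) < Real.sqrt (L v) := Real.sqrt_pos.mpr (hpos v hv)
      field_simp
    exact this.hasDerivWithinAt.congr (fun v hv => heq v hv) (heq u hu)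
  · rw [interior_Ioi]
    intro u hu
    have hs : (0:ℝ) < Real.sqrt (L u) := Real.sqrt_pos.mpr (hpos u hu)
    have hs2 : Real.sqrt (L u) ^ 2 = L u := Real.sq_sqrt (hpos u hu).le
    have hkey := aux_key u hu
    have hnum : 1 * ((1 + u ^ 2) * Real.sqrt (L u)) -
        u * (2 * u * Real.sqrt (L u) +
          (1 + u ^ 2) * ((2 * u / (1 + u ^ 2)) / (2 * Real.sqrt (L u)))) =
        ((1 - u ^ 2) * L u - u ^ 2) / Real.sqrt (L u) := by
      field_simp
      linear_combination (1 - u ^ 2) * hs2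
    rw [hnum]
    apply div_nonpos_of_nonpos_of_nonneg
    · apply div_nonpos_of_nonpos_of_nonneg _ hs.le
      linarith
    · positivity

/-- For `0 ≤ p ≤ 2`, the function `t ↦ √(log(1 + t^p))` is concave on `(0, ∞)`. -/
theorem sqrt_log_one_add_rpow_concave (p : ℝ) (hp0 : 0 ≤ p) (hp2 : p ≤ 2) :
    ConcaveOn ℝ (Set.Ioi (0 : ℝ)) (fun t => Real.sqrt (Real.log (1 + t ^ p))) := by
  have hrpow : ConcaveOn ℝ (Set.Ioi (0:ℝ)) (fun t : ℝ => t ^ (p / 2)) :=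
    (Real.concaveOn_rpow (by linarith) (by linarith)).subset
      Set.Ioi_subset_Ici_self (convex_Ioi 0)
  have hmaps : Set.MapsTo (fun t : ℝ => t ^ (p / 2)) (Set.Ioi 0) (Set.Ioi 0) :=
    fun t ht => Real.rpow_pos_of_pos ht _
  have hmono : MonotoneOn (fun u : ℝ => Real.sqrt (Real.log (1 + u ^ 2)))
      (Set.Ioi (0:ℝ)) := by
    intro u hu v hv huv
    apply Real.sqrt_le_sqrt
    apply Real.log_le_log (by positivity)
    nlinarith [Set.mem_Ioi.mp hu]
  have hcomp := aux_concaveOn_comp aux_g_concave hrpow hmaps hmono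
  refine aux_concaveOn_congr hcomp ?_
  intro t ht
  have ht' : (0:ℝ) < t := ht
  have : (t ^ (p / 2)) ^ 2 = t ^ p := by
    rw [sq, ← Real.rpow_add ht']
    ring_nf
  simp only [Function.comp, this]
end

section
/- For Hermitian positive definite n×n matrices X, Y, the quantity δ_S(X,Y) = sqrt(log(det((X+Y)/2) / sqrt(det X · det Y))) is well-defined (the argument of the outer log is ≥ 1), symmetric, and vanishes iff X = Y. -/
open Matrix
open scoped ComplexOrder

private lemma sqrtProd {ι : Type*} (s : Finset ι) (f : ι → ℝ) (hf : ∀ i ∈ s, 0 ≤ f i) :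
    Real.sqrt (∏ i ∈ s, f i) = ∏ i ∈ s, Real.sqrt (f i) := by
  classical
  induction s using Finset.induction with
  | empty => simp
  | @insert a s' h ih =>
    rw [Finset.prod_insert h, Finset.prod_insert h,
      Real.sqrt_mul (hf a (Finset.mem_insert_self a s')),
      ih (fun i hi => hf i (Finset.mem_insert_of_mem hi))]

private lemma posDefConj {n : ℕ} {B M : Matrix (Fin n) (Fin n) ℂ} (hM : M.PosDef)
    (hB : IsUnit B.det) : (Bᴴ * M * B).PosDef := by
  refine Matrix.PosDef.of_dotProduct_mulVec_pos
    (Matrix.isHermitian_conjTranspose_mul_mul B hM.isHermitian) (fun x hx => ?_)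
  have hBx : B *ᵥ x ≠ 0 := by
    intro h
    apply hx
    have := congrArg (fun v => B⁻¹ *ᵥ v) h
    simpa [Matrix.mulVec_mulVec, Matrix.nonsing_inv_mul B hB] using this
  have key : dotProduct (star x) ((Bᴴ * M * B) *ᵥ x)
      = dotProduct (star (B *ᵥ x)) (M *ᵥ (B *ᵥ x)) := by
    rw [show (Bᴴ * M * B) *ᵥ x = Bᴴ *ᵥ (M *ᵥ (B *ᵥ x)) by
      simp [Matrix.mulVec_mulVec, Matrix.mul_assoc],
      Matrix.dotProduct_mulVec, ← Matrix.star_mulVec]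
  rw [key]
  exact hM.dotProduct_mulVec_pos hBx

private lemma coreIneq {n : ℕ} {M : Matrix (Fin n) (Fin n) ℂ} (hM : M.PosDef) :
    Real.sqrt (Matrix.det M).re ≤ (Matrix.det ((1/2 : ℂ) • (1 + M))).re ∧
      ((Matrix.det ((1/2 : ℂ) • (1 + M))).re = Real.sqrt (Matrix.det M).re → M = 1) := by
  have hH : M.IsHermitian := hM.isHermitian
  set μ := hH.eigenvalues with hμdef
  have hμ : ∀ i, 0 < μ i := hM.eigenvalues_pos
  have hdetM : (Matrix.det M).re = ∏ i, μ i := by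
    rw [hH.det_eq_prod_eigenvalues]
    norm_cast
  set U : Matrix (Fin n) (Fin n) ℂ := (hH.eigenvectorUnitary : Matrix (Fin n) (Fin n) ℂ) with hUdef
  have hU : U * star U = 1 := Matrix.mem_unitaryGroup_iff.mp hH.eigenvectorUnitary.2
  have hdiag : Matrix.diagonal (fun i => 1 + (μ i : ℂ))
      = 1 + Matrix.diagonal (RCLike.ofReal ∘ μ) := by
    rw [← Matrix.diagonal_one, ← Matrix.diagonal_add]
    congr 1
  have h1M : (1 : Matrix (Fin n) (Fin n) ℂ) + M
      = U * Matrix.diagonal (fun i => 1 + (μ i : ℂ)) * star U := by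
    rw [hdiag, Matrix.mul_add, Matrix.mul_one, Matrix.add_mul, hU]
    congr 1
    exact hH.spectral_theorem
  have hdet1M : (Matrix.det ((1/2 : ℂ) • (1 + M))).re = ∏ i, (1 + μ i)/2 := by
    rw [Matrix.det_smul, h1M, Matrix.det_mul_right_comm, hU, Matrix.one_mul,
      Matrix.det_diagonal,
      show (1/2 : ℂ) ^ (Fintype.card (Fin n)) * ∏ i, (1 + (μ i : ℂ))
        = ((∏ i, (1 + μ i)/2 : ℝ) : ℂ) by
        push_cast
        rw [Finset.prod_div_distrib, Finset.prod_const, Fintype.card_fin]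
        rw [Finset.card_univ, Fintype.card_fin]
        simp only [one_div]
        ring_nf
        simp [inv_pow], Complex.ofReal_re]
  have amgm : ∀ i, Real.sqrt (μ i) ≤ (1 + μ i)/2 := fun i => by
    nlinarith [Real.sq_sqrt (hμ i).le, Real.sqrt_nonneg (μ i), sq_nonneg (Real.sqrt (μ i) - 1)]
  have hsq : Real.sqrt (Matrix.det M).re = ∏ i, Real.sqrt (μ i) := by
    rw [hdetM, sqrtProd _ _ (fun i _ => (hμ i).le)]
  constructor
  · rw [hsq, hdet1M]
    exact Finset.prod_le_prod (fun i _ => Real.sqrt_nonneg _) (fun i _ => amgm i)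
  · intro heq
    have hall : ∀ i, μ i = 1 := by
      by_contra hc
      push_neg at hc
      obtain ⟨i, hi⟩ := hc
      have h1 : Real.sqrt (μ i) ≠ 1 := by
        intro h
        apply hi
        have := Real.sq_sqrt (hμ i).le
        rw [h] at this
        simpa using this.symm
      have hstrict : Real.sqrt (μ i) < (1 + μ i)/2 := by
        rcases lt_or_gt_of_ne h1 with h | h <;>
          nlinarith [Real.sq_sqrt (hμ i).le, Real.sqrt_nonneg (μ i),
            sq_nonneg (Real.sqrt (μ i) - 1)]
      have hlt := Finset.prod_lt_prod (f := fun j => Real.sqrt (μ j))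
        (g := fun j => (1 + μ j)/2) (fun j _ => Real.sqrt_pos.mpr (hμ j))
        (fun j _ => amgm j) ⟨i, Finset.mem_univ i, hstrict⟩
      rw [← hsq, ← hdet1M] at hlt
      exact absurd heq (ne_of_gt hlt)
    have hD1 : Matrix.diagonal (RCLike.ofReal ∘ μ) = (1 : Matrix (Fin n) (Fin n) ℂ) := by
      have hfun : (RCLike.ofReal ∘ μ : Fin n → ℂ) = fun _ => 1 := funext fun i => by
        simp [hall i]
      rw [hfun]
      exact Matrix.diagonal_one
    rw [hH.spectral_theorem, hD1, map_one]

private lemma deltaSelf {n : ℕ} {Z : Matrix (Fin n) (Fin n) ℂ} (hZ : Z.PosDef) :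
    Real.sqrt (Real.log ((Matrix.det ((1 / 2 : ℂ) • (Z + Z))).re /
      Real.sqrt ((Matrix.det Z).re * (Matrix.det Z).re))) = 0 := by
  have ha : 0 < (Matrix.det Z).re := by simpa using (Complex.lt_def.mp hZ.det_pos).1
  have hZZ : (1/2 : ℂ) • (Z + Z) = Z := by
    rw [← two_smul ℂ Z, smul_smul]
    norm_num
  rw [hZZ, Real.sqrt_mul_self ha.le, div_self ha.ne', Real.log_one, Real.sqrt_zero]

/-- The S-divergence of Hermitian positive definite matrices:
`δ_S(X,Y) = √(log(det((X+Y)/2) / √(det X · det Y)))`. -/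
noncomputable def deltaS {n : ℕ} (X Y : Matrix (Fin n) (Fin n) ℂ) : ℝ :=
  Real.sqrt (Real.log ((Matrix.det ((1 / 2 : ℂ) • (X + Y))).re /
    Real.sqrt ((Matrix.det X).re * (Matrix.det Y).re)))

open scoped MatrixOrder in
private theorem deltaS_basic_aux {n : ℕ} (X Y : Matrix (Fin n) (Fin n) ℂ)
    (hX : X.PosDef) (hY : Y.PosDef) :
    1 ≤ (Matrix.det ((1 / 2 : ℂ) • (X + Y))).re /
        Real.sqrt ((Matrix.det X).re * (Matrix.det Y).re) ∧
    (Real.sqrt (Real.log ((Matrix.det ((1 / 2 : ℂ) • (X + Y))).re /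
      Real.sqrt ((Matrix.det X).re * (Matrix.det Y).re))) = 0 ↔ X = Y) := by
  have ha : 0 < (Matrix.det X).re := by simpa using (Complex.lt_def.mp hX.det_pos).1
  set S := CFC.sqrt X with hSdef
  have hS2 : S * S = X := CFC.sqrt_mul_sqrt_self X hX.posSemidef.nonneg
  have hSH : S.IsHermitian := (CFC.sqrt_nonneg X).posSemidef.isHermitian
  have hdS : S.det * S.det = X.det := by rw [← Matrix.det_mul, hS2]
  have hXdetne : X.det ≠ 0 := hX.det_pos.ne'
  have hSdetne : S.det ≠ 0 := by
    intro h
    rw [h, zero_mul] at hdS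
    exact hXdetne hdS.symm
  have hSunit : IsUnit S.det := hSdetne.isUnit
  have hSinvH : (S⁻¹)ᴴ = S⁻¹ := by rw [Matrix.conjTranspose_nonsing_inv, hSH.eq]
  have hSinvUnit : IsUnit (S⁻¹).det := Matrix.isUnit_nonsing_inv_det S hSunit
  set M := S⁻¹ * Y * S⁻¹ with hMdef
  have hMpd : M.PosDef := by
    have := posDefConj (B := S⁻¹) hY hSinvUnit
    rwa [hSinvH] at this
  have hY' : S * M * S = Y := by
    rw [hMdef]
    simp only [Matrix.mul_assoc]
    rw [Matrix.nonsing_inv_mul S hSunit, Matrix.mul_one, ← Matrix.mul_assoc,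
      Matrix.mul_nonsing_inv S hSunit, Matrix.one_mul]
  have hXY : (1/2 : ℂ) • (X + Y) = S * ((1/2 : ℂ) • (1 + M)) * S := by
    rw [mul_smul_comm, smul_mul_assoc]
    congr 1
    rw [Matrix.mul_add, Matrix.mul_one, Matrix.add_mul, hS2, hY']
  have hdXY : ((1/2 : ℂ) • (X + Y)).det = S.det * S.det * ((1/2 : ℂ) • (1 + M)).det := by
    rw [hXY, Matrix.det_mul, Matrix.det_mul]
    ring
  have hdY : Y.det = S.det * S.det * M.det := by
    rw [← hY', Matrix.det_mul, Matrix.det_mul]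
    ring
  have hSreal : S.det = ((S.det).re : ℂ) := by
    have h1 : (starRingEnd ℂ) S.det = S.det := by
      rw [show (starRingEnd ℂ) S.det = star S.det from rfl, ← Matrix.det_conjTranspose, hSH.eq]
    exact (Complex.conj_eq_iff_re.mp h1).symm
  have hsa : (S.det).re * (S.det).re = (Matrix.det X).re := by
    have h := hdS
    rw [hSreal, ← Complex.ofReal_mul] at h
    rw [← h, Complex.ofReal_re]
  have hs2 : 0 < (S.det).re * (S.det).re := hsa ▸ ha
  have hb : (Matrix.det Y).re = (S.det).re * (S.det).re * (Matrix.det M).re := by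
    rw [hdY, hSreal, ← Complex.ofReal_mul, Complex.re_ofReal_mul, Complex.ofReal_re]
  have hDeq : (Matrix.det ((1/2 : ℂ) • (X + Y))).re
      = (S.det).re * (S.det).re * (Matrix.det ((1/2 : ℂ) • (1 + M))).re := by
    rw [hdXY, hSreal, ← Complex.ofReal_mul, Complex.re_ofReal_mul, Complex.ofReal_re]
  have hm : 0 < (Matrix.det M).re := by simpa using (Complex.lt_def.mp hMpd.det_pos).1
  obtain ⟨hcore1, hcore2⟩ := coreIneq hMpd
  have hsqrtab : Real.sqrt ((Matrix.det X).re * (Matrix.det Y).re)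
      = (S.det).re * (S.det).re * Real.sqrt (Matrix.det M).re := by
    rw [← hsa, hb,
      show (S.det).re * (S.det).re * ((S.det).re * (S.det).re * (Matrix.det M).re)
        = ((S.det).re * (S.det).re) * ((S.det).re * (S.det).re) * (Matrix.det M).re by ring,
      Real.sqrt_mul (mul_nonneg hs2.le hs2.le), Real.sqrt_mul_self hs2.le]
  have hden : 0 < Real.sqrt ((Matrix.det X).re * (Matrix.det Y).re) := by
    rw [hsqrtab]
    exact mul_pos hs2 (Real.sqrt_pos.mpr hm)
  have hge : 1 ≤ (Matrix.det ((1 / 2 : ℂ) • (X + Y))).re /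
      Real.sqrt ((Matrix.det X).re * (Matrix.det Y).re) := by
    rw [one_le_div hden, hDeq, hsqrtab]
    exact mul_le_mul_of_nonneg_left hcore1 hs2.le
  refine ⟨hge, ?_, ?_⟩
  · intro h0
    have hlog : Real.log ((Matrix.det ((1 / 2 : ℂ) • (X + Y))).re /
        Real.sqrt ((Matrix.det X).re * (Matrix.det Y).re)) = 0 :=
      le_antisymm (Real.sqrt_eq_zero'.mp h0) (Real.log_nonneg hge)
    have hr : (Matrix.det ((1 / 2 : ℂ) • (X + Y))).re /
        Real.sqrt ((Matrix.det X).re * (Matrix.det Y).re) = 1 := by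
      rcases Real.log_eq_zero.mp hlog with h | h | h
      · linarith
      · exact h
      · linarith
    have hD : (Matrix.det ((1 / 2 : ℂ) • (X + Y))).re
        = Real.sqrt ((Matrix.det X).re * (Matrix.det Y).re) := by
      rwa [div_eq_one_iff_eq hden.ne'] at hr
    have hd : (Matrix.det ((1/2 : ℂ) • (1 + M))).re = Real.sqrt (Matrix.det M).re := by
      have h2 : (S.det).re * (S.det).re * (Matrix.det ((1/2 : ℂ) • (1 + M))).re
          = (S.det).re * (S.det).re * Real.sqrt (Matrix.det M).re := by
        rw [← hDeq, ← hsqrtab, hD]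
      exact mul_left_cancel₀ hs2.ne' h2
    have hM1 : M = 1 := hcore2 hd
    rw [← hY', hM1, Matrix.mul_one, hS2]
  · intro h
    rw [h]
    exact deltaSelf hY


/-- The S-divergence is well defined (the argument of the logarithm is `≥ 1`),
symmetric, and vanishes iff the arguments agree. -/
theorem deltaS_basic {n : ℕ} (X Y : Matrix (Fin n) (Fin n) ℂ)
    (hX : X.PosDef) (hY : Y.PosDef) :
    1 ≤ (Matrix.det ((1 / 2 : ℂ) • (X + Y))).re /
        Real.sqrt ((Matrix.det X).re * (Matrix.det Y).re) ∧
    deltaS X Y = deltaS Y X ∧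
    (deltaS X Y = 0 ↔ X = Y) := by
  obtain ⟨h1, h2⟩ := deltaS_basic_aux X Y hX hY
  refine ⟨h1, ?_, h2⟩
  unfold deltaS
  rw [add_comm Y X, mul_comm (Matrix.det Y).re]
end

section
/- For n×n Hermitian positive definite matrices X, Y, one has det((X+Y)/2) ≥ sqrt(det(X) det(Y)), with equality iff X = Y. -/
open Matrix
open scoped ComplexOrder

lemma aux_posDef_conj {n : ℕ} {A B : Matrix (Fin n) (Fin n) ℂ} (hA : A.PosDef)
    (hB : IsUnit B) : (Bᴴ * A * B).PosDef := by
  refine PosDef.of_dotProduct_mulVec_pos (isHermitian_conjTranspose_mul_mul B hA.1) fun x hx => ?_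
  have hinj : Function.Injective B.mulVec := Matrix.mulVec_injective_iff_isUnit.mpr hB
  have hBx : B *ᵥ x ≠ 0 := fun h => hx (hinj.eq_iff' (mulVec_zero _) |>.1 h)
  simpa only [star_mulVec, dotProduct_mulVec, vecMul_vecMul] using hA.dotProduct_mulVec_pos hBx

/-- Key determinant congruence: conjugating by a unitary preserves det. -/
lemma aux_det_unitary_conj {n : ℕ} (U : Matrix.unitaryGroup (Fin n) ℂ)
    (B : Matrix (Fin n) (Fin n) ℂ) :
    Matrix.det ((U : Matrix (Fin n) (Fin n) ℂ) * B * star (U : Matrix (Fin n) (Fin n) ℂ)) =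
      Matrix.det B := by
  have h1 : (U : Matrix (Fin n) (Fin n) ℂ) * star (U : Matrix (Fin n) (Fin n) ℂ) = 1 :=
    (Matrix.mem_unitaryGroup_iff).mp U.2
  have h2 := congrArg Matrix.det h1
  rw [Matrix.det_mul, Matrix.det_one] at h2
  rw [Matrix.det_mul, Matrix.det_mul]
  calc (U : Matrix (Fin n) (Fin n) ℂ).det * B.det * (star (U : Matrix (Fin n) (Fin n) ℂ)).det
      = ((U : Matrix (Fin n) (Fin n) ℂ).det * (star (U : Matrix (Fin n) (Fin n) ℂ)).det) * B.det := by ring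
    _ = B.det := by rw [h2, one_mul]

/-- Determinant AM-GM inequality for Hermitian positive definite matrices,
with the equality case. -/
theorem det_avg_ge_sqrt_det_mul_det {n : ℕ} (X Y : Matrix (Fin n) (Fin n) ℂ)
    (hX : X.PosDef) (hY : Y.PosDef) :
    Real.sqrt ((Matrix.det X).re * (Matrix.det Y).re) ≤
      (Matrix.det ((1 / 2 : ℂ) • (X + Y))).re ∧
    ((Matrix.det ((1 / 2 : ℂ) • (X + Y))).re =
      Real.sqrt ((Matrix.det X).re * (Matrix.det Y).re) ↔ X = Y) := by
  classical
  -- the square root S of X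
  set S : Matrix (Fin n) (Fin n) ℂ := (open scoped MatrixOrder in CFC.sqrt X) with hSdef
  have hSps : S.PosSemidef := (open scoped MatrixOrder in (CFC.sqrt_nonneg X).posSemidef)
  have hSH : Sᴴ = S := hSps.1
  have hSS : S * S = X := (open scoped MatrixOrder in CFC.sqrt_mul_sqrt_self X hX.posSemidef.nonneg)
  have hdX : (0 : ℂ) < X.det := hX.det_pos
  have hdetS : S.det * S.det = X.det := by rw [← Matrix.det_mul, hSS]
  have hdetSne : S.det ≠ 0 := by
    intro h
    rw [h, mul_zero] at hdetS
    exact hdX.ne' hdetS.symm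
  have hSu : IsUnit S := (Matrix.isUnit_iff_isUnit_det S).mpr hdetSne.isUnit
  have hSiu : IsUnit S⁻¹ := (Matrix.isUnit_nonsing_inv_iff).mpr hSu
  have hSinvH : (S⁻¹)ᴴ = S⁻¹ := by rw [Matrix.conjTranspose_nonsing_inv, hSH]
  -- the matrix M
  set M : Matrix (Fin n) (Fin n) ℂ := S⁻¹ * Y * S⁻¹ with hMdef
  have hMpd : M.PosDef := by
    have := aux_posDef_conj (B := S⁻¹) hY hSiu
    rwa [hSinvH] at this
  have hSMS : S * M * S = Y := by
    rw [hMdef]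
    have h1 : S * S⁻¹ = 1 := Matrix.mul_nonsing_inv S hdetSne.isUnit
    have h2 : S⁻¹ * S = 1 := Matrix.nonsing_inv_mul S hdetSne.isUnit
    calc S * (S⁻¹ * Y * S⁻¹) * S = (S * S⁻¹) * Y * (S⁻¹ * S) := by
          simp only [Matrix.mul_assoc]
      _ = Y := by rw [h1, h2, one_mul, mul_one]
  -- eigenvalues of M
  have hM1 : M.IsHermitian := hMpd.1
  set lam : Fin n → ℝ := hM1.eigenvalues with hlam
  have hlampos : ∀ i, 0 < lam i := hMpd.eigenvalues_pos
  set U := hM1.eigenvectorUnitary with hU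
  have hspec : M = (U : Matrix (Fin n) (Fin n) ℂ) *
      Matrix.diagonal (RCLike.ofReal ∘ lam) * star (U : Matrix (Fin n) (Fin n) ℂ) :=
    hM1.spectral_theorem
  have hUstar : (U : Matrix (Fin n) (Fin n) ℂ) * star (U : Matrix (Fin n) (Fin n) ℂ) = 1 :=
    (Matrix.mem_unitaryGroup_iff).mp U.2
  -- determinant computations
  have hhalfM : (1 / 2 : ℂ) • (1 + M) = (U : Matrix (Fin n) (Fin n) ℂ) *
      ((1 / 2 : ℂ) • (1 + Matrix.diagonal (RCLike.ofReal ∘ lam))) *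
      star (U : Matrix (Fin n) (Fin n) ℂ) := by
    rw [Matrix.mul_smul, Matrix.smul_mul]
    congr 1
    rw [Matrix.mul_add, Matrix.add_mul, mul_one, hUstar, ← hspec]
  have hdiag : (1 / 2 : ℂ) • (1 + Matrix.diagonal (RCLike.ofReal ∘ lam)) =
      Matrix.diagonal (fun i => ((1 / 2 : ℂ) * (1 + (lam i : ℂ)))) := by
    rw [← Matrix.diagonal_one, Matrix.diagonal_add, ← Matrix.diagonal_smul]
    congr 1
  set P : ℝ := ∏ i, (1 + lam i) / 2 with hP
  set Q : ℝ := ∏ i, lam i with hQ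
  have hPpos : 0 < P := Finset.prod_pos fun i _ => by have := hlampos i; positivity
  have hQpos : 0 < Q := Finset.prod_pos fun i _ => hlampos i
  have hdethalfM : Matrix.det ((1 / 2 : ℂ) • (1 + M)) = (P : ℂ) := by
    rw [hhalfM, aux_det_unitary_conj, hdiag, Matrix.det_diagonal, hP, Complex.ofReal_prod]
    refine Finset.prod_congr rfl fun i _ => ?_
    push_cast
    ring
  have hdetM : M.det = (Q : ℂ) := by
    rw [hM1.det_eq_prod_eigenvalues, hQ, Complex.ofReal_prod]
    rfl
  have hdetY : Y.det = X.det * (Q : ℂ) := by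
    rw [← hSMS, Matrix.det_mul, Matrix.det_mul, hdetM, ← hdetS]
    ring
  have hXYS : (1 / 2 : ℂ) • (X + Y) = S * ((1 / 2 : ℂ) • (1 + M)) * S := by
    rw [Matrix.mul_smul, Matrix.smul_mul]
    congr 1
    rw [Matrix.mul_add, Matrix.add_mul, mul_one, hSS, hSMS]
  have hdetXY : Matrix.det ((1 / 2 : ℂ) • (X + Y)) = X.det * (P : ℂ) := by
    rw [hXYS, Matrix.det_mul, Matrix.det_mul, hdethalfM, ← hdetS]
    ring
  -- pass to real parts
  have hdXre : 0 < X.det.re ∧ X.det.im = 0 := by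
    rw [Complex.lt_def] at hdX
    exact ⟨by simpa using hdX.1, by simpa using hdX.2.symm⟩
  set a : ℝ := X.det.re with ha
  have hXdet : X.det = (a : ℂ) := Complex.ext rfl (by simp [hdXre.2])
  have hapos : 0 < a := hdXre.1
  have hre1 : (Matrix.det ((1 / 2 : ℂ) • (X + Y))).re = a * P := by
    rw [hdetXY, hXdet, ← Complex.ofReal_mul, Complex.ofReal_re]
  have hre2 : (Matrix.det Y).re = a * Q := by
    rw [hdetY, hXdet, ← Complex.ofReal_mul, Complex.ofReal_re]
  have hsqrt : Real.sqrt ((Matrix.det X).re * (Matrix.det Y).re) = a * Real.sqrt Q := by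
    rw [← ha, hre2, ← mul_assoc, ← sq]
    rw [Real.sqrt_mul (by positivity), Real.sqrt_sq hapos.le]
  -- the scalar inequality: sqrt Q ≤ P
  have hterm : ∀ i : Fin n, lam i ≤ ((1 + lam i) / 2) ^ 2 := fun i => by nlinarith [hlampos i, sq_nonneg (lam i - 1)]
  have hQP : Q ≤ P ^ 2 := by
    rw [hQ, hP, ← Finset.prod_pow]
    exact Finset.prod_le_prod (fun i _ => (hlampos i).le) fun i _ => hterm i
  have hineq : Real.sqrt Q ≤ P := by
    calc Real.sqrt Q ≤ Real.sqrt (P ^ 2) := Real.sqrt_le_sqrt hQP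
      _ = P := Real.sqrt_sq hPpos.le
  constructor
  · rw [hsqrt, hre1]
    exact mul_le_mul_of_nonneg_left hineq hapos.le
  constructor
  · -- equality implies X = Y
    intro heq
    rw [hsqrt, hre1] at heq
    have hPQ : P = Real.sqrt Q := mul_left_cancel₀ hapos.ne' heq
    have hP2Q : P ^ 2 = Q := by rw [hPQ, Real.sq_sqrt hQpos.le]
    -- each eigenvalue equals 1
    have hlam1 : ∀ i, lam i = 1 := by
      by_contra hcon
      push_neg at hcon
      obtain ⟨j, hj⟩ := hcon
      have hstrict : lam j < ((1 + lam j) / 2) ^ 2 := by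
        have h1 : (0:ℝ) < (lam j - 1) ^ 2 := by
          have h0 : lam j - 1 ≠ 0 := sub_ne_zero_of_ne hj
          positivity
        nlinarith [hlampos j]
      have : Q < P ^ 2 := by
        rw [hQ, hP, ← Finset.prod_pow]
        exact Finset.prod_lt_prod (fun i _ => hlampos i) (fun i _ => hterm i)
          ⟨j, Finset.mem_univ j, hstrict⟩
      linarith
    have hM1' : M = 1 := by
      rw [hspec]
      have hfun : (RCLike.ofReal ∘ lam : Fin n → ℂ) = fun _ => 1 := by
        funext i
        simp [hlam1 i]
      have : Matrix.diagonal (RCLike.ofReal ∘ lam) = (1 : Matrix (Fin n) (Fin n) ℂ) := by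
        rw [hfun]
        exact Matrix.diagonal_one
      rw [this, mul_one, hUstar]
    have : Y = X := by rw [← hSMS, hM1', mul_one, hSS]
    exact this.symm
  · -- X = Y implies equality
    rintro rfl
    have h2X : (1 / 2 : ℂ) • (X + X) = X := by
      rw [← two_smul ℂ X, smul_smul]
      norm_num
    rw [h2X, Real.sqrt_mul_self hapos.le]
end
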